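/- Let a : [0,1] → ℝ be continuous, with a(x₀)=0 for some x₀ ∈ (0,1), a > 0 on [0,1]\{x₀}, a ∈ W^{1,1}(0,1), and suppose there exists K > 0 such that (x-x₀)a'(x) ≤ K a(x) for a.e. x ∈ [0,1]. Then for all γ ≥ K the map x ↦ |x-x₀|^γ / a(x) is nonincreasing on [0,x₀) and nondecreasing on (x₀,1]. -/

import Mathlib

open MeasureTheory Set

open intervalIntegral in
lemma ibp_ac (f g f' g' : ℝ → ℝ) (x y : ℝ) (hxy : x ≤ y)
    (hfi : IntegrableOn f' (Ioc x y))
    (hf : ∀ t ∈ Icc x y, f t = f x + ∫ s in x..t, f' s)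
    (hg : ∀ t ∈ Icc x y, HasDerivAt g (g' t) t)
    (hg'c : ContinuousOn g' (Icc x y)) :
    f y * g y - f x * g x = ∫ t in Ioc x y, (f' t * g t + f t * g' t) := by
  -- continuity of f and g on Icc x y
  have hfi' : IntervalIntegrable f' volume x y := by
    rw [intervalIntegrable_iff_integrableOn_Ioc_of_le hxy]; exact hfi
  have hfc : ContinuousOn f (Icc x y) := by
    have : ContinuousOn (fun t => f x + ∫ s in x..t, f' s) (Icc x y) := by
      apply continuousOn_const.add
      have := continuousOn_primitive_interval' hfi' left_mem_uIcc
      rwa [uIcc_of_le hxy] at this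
    exact this.congr hf
  have hgc : ContinuousOn g (Icc x y) := fun t ht => (hg t ht).continuousAt.continuousWithinAt
  -- FTC for g on subintervals
  have gFTC : ∀ s ∈ Icc x y, (∫ t in s..y, g' t) = g y - g s := by
    intro s hs
    apply integral_eq_sub_of_hasDerivAt
    · intro t ht
      rw [uIcc_of_le hs.2] at ht
      exact hg t ⟨le_trans hs.1 ht.1, ht.2⟩
    · apply ContinuousOn.intervalIntegrable
      apply hg'c.mono
      rw [uIcc_of_le hs.2]
      exact Icc_subset_Icc hs.1 le_rfl
  -- integrability facts
  have hg'i : IntegrableOn g' (Ioc x y) :=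
    (hg'c.integrableOn_compact isCompact_Icc).mono_set Ioc_subset_Icc_self
  have hf'g : IntegrableOn (fun t => f' t * g t) (Ioc x y) := by
    have := hfi'.mul_continuousOn (μ := volume)
      (by rwa [uIcc_of_le hxy] : ContinuousOn g (uIcc x y))
    rwa [intervalIntegrable_iff_integrableOn_Ioc_of_le hxy] at this
  have hfg' : IntegrableOn (fun t => f t * g' t) (Ioc x y) :=
    ((hfc.mul hg'c).integrableOn_compact isCompact_Icc).mono_set Ioc_subset_Icc_self
  -- the triangle Fubini
  set μ := volume.restrict (Ioc x y) with hμ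
  have hFi : Integrable (fun p : ℝ × ℝ =>
      ({p : ℝ × ℝ | p.2 ≤ p.1}.indicator (fun p => g' p.1 * f' p.2)) p) (μ.prod μ) := by
    apply Integrable.indicator
    · exact Integrable.mul_prod hg'i hfi
    · exact measurableSet_le measurable_snd measurable_fst
  have hswap := integral_integral_swap
    (f := fun t s => ({p : ℝ × ℝ | p.2 ≤ p.1}.indicator (fun p => g' p.1 * f' p.2)) (t, s)) hFi
  -- compute the left side of hswap
  have hL : (∫ t, (∫ s, ({p : ℝ × ℝ | p.2 ≤ p.1}.indicator (fun p => g' p.1 * f' p.2)) (t, s) ∂μ) ∂μ)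
      = ∫ t in Ioc x y, (f t - f x) * g' t := by
    apply setIntegral_congr_fun measurableSet_Ioc
    intro t ht
    dsimp only
    have h1 : (fun s => ({p : ℝ × ℝ | p.2 ≤ p.1}.indicator (fun p => g' p.1 * f' p.2)) (t, s))
        = (Iic t).indicator (fun s => g' t * f' s) := by
      ext s
      by_cases h : s ≤ t <;> simp [Set.indicator, h]
    rw [h1, MeasureTheory.integral_indicator measurableSet_Iic, hμ, Measure.restrict_restrict measurableSet_Iic]
    have h2 : Iic t ∩ Ioc x y = Ioc x t := by
      ext s; simp only [mem_inter_iff, mem_Iic, mem_Ioc]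
      constructor
      · rintro ⟨h1, h2, h3⟩; exact ⟨h2, h1⟩
      · rintro ⟨h1, h2⟩; exact ⟨h2, h1, le_trans h2 ht.2⟩
    rw [h2, MeasureTheory.integral_const_mul]
    have h3 : (∫ s in Ioc x t, f' s) = f t - f x := by
      rw [← intervalIntegral.integral_of_le (le_of_lt ht.1)]
      have := hf t ⟨le_of_lt ht.1, ht.2⟩
      linarith
    rw [h3]; ring
  -- compute the right side of hswap
  have hR : (∫ s, (∫ t, ({p : ℝ × ℝ | p.2 ≤ p.1}.indicator (fun p => g' p.1 * f' p.2)) (t, s) ∂μ) ∂μ)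
      = ∫ s in Ioc x y, f' s * (g y - g s) := by
    apply setIntegral_congr_fun measurableSet_Ioc
    intro s hs
    dsimp only
    have h1 : (fun t => ({p : ℝ × ℝ | p.2 ≤ p.1}.indicator (fun p => g' p.1 * f' p.2)) (t, s))
        = (Ici s).indicator (fun t => g' t * f' s) := by
      ext t
      by_cases h : s ≤ t <;> simp [Set.indicator, h]
    rw [h1, MeasureTheory.integral_indicator measurableSet_Ici, hμ, Measure.restrict_restrict measurableSet_Ici]
    have h2 : Ici s ∩ Ioc x y = Icc s y := by
      ext t; simp only [mem_inter_iff, mem_Ici, mem_Ioc, mem_Icc]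
      constructor
      · rintro ⟨h1, h2, h3⟩; exact ⟨h1, h3⟩
      · rintro ⟨h1, h2⟩; exact ⟨h1, lt_of_lt_of_le hs.1 h1, h2⟩
    have h3 : (∫ t in Icc s y, g' t * f' s) = (∫ t in Icc s y, g' t) * f' s := by
      rw [← MeasureTheory.integral_mul_const]
    rw [h2, h3, integral_Icc_eq_integral_Ioc, ← intervalIntegral.integral_of_le hs.2,
      gFTC s ⟨le_of_lt hs.1, hs.2⟩]
    ring
  rw [hL, hR] at hswap
  -- expand both sides
  have hgy : g y - g x = ∫ t in Ioc x y, g' t := by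
    rw [← intervalIntegral.integral_of_le hxy, gFTC x ⟨le_rfl, hxy⟩]
  have hfy : f y - f x = ∫ t in Ioc x y, f' t := by
    rw [← intervalIntegral.integral_of_le hxy]
    have := hf y ⟨hxy, le_rfl⟩; linarith
  have e1 : (∫ t in Ioc x y, (f t - f x) * g' t)
      = (∫ t in Ioc x y, f t * g' t) - f x * (g y - g x) := by
    have : (∫ t in Ioc x y, (f t - f x) * g' t)
        = (∫ t in Ioc x y, f t * g' t) - ∫ t in Ioc x y, f x * g' t := by
      rw [← integral_sub hfg' (hg'i.const_mul (f x))]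
      congr 1; ext t; ring
    rw [this, MeasureTheory.integral_const_mul, ← hgy]
  have e2 : (∫ s in Ioc x y, f' s * (g y - g s))
      = g y * (f y - f x) - ∫ s in Ioc x y, f' s * g s := by
    have : (∫ s in Ioc x y, f' s * (g y - g s))
        = (∫ s in Ioc x y, f' s * g y) - ∫ s in Ioc x y, f' s * g s := by
      rw [← integral_sub (hfi.mul_const (g y)) hf'g]
      congr 1; ext s; ring
    rw [this, MeasureTheory.integral_mul_const, ← hfy]; ring
  rw [e1, e2] at hswap
  rw [integral_add hf'g hfg']
  linarith

/-- Lemma 2.1.1: under the interior degeneracy hypothesis, for all γ ≥ K the map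
`x ↦ |x-x₀|^γ / a x` is nonincreasing on the left of `x₀` and nondecreasing on the right. -/
theorem stmt0 (a : ℝ → ℝ) (x₀ K : ℝ)
    (hx₀ : x₀ ∈ Set.Ioo (0:ℝ) 1)
    (hcont : ContinuousOn a (Set.Icc 0 1))
    (ha0 : a x₀ = 0)
    (hpos : ∀ x ∈ Set.Icc (0:ℝ) 1, x ≠ x₀ → 0 < a x)
    (hK : 0 < K)
    (hW11 : MeasureTheory.IntegrableOn (deriv a) (Set.Icc 0 1) ∧
      ∀ x ∈ Set.Icc (0:ℝ) 1, a x = a 0 + ∫ t in (0:ℝ)..x, deriv a t)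
    (hineq : ∀ᵐ x ∂(MeasureTheory.volume.restrict (Set.Icc (0:ℝ) 1)),
      (x - x₀) * deriv a x ≤ K * a x) :
    ∀ γ : ℝ, K ≤ γ →
      AntitoneOn (fun x => |x - x₀| ^ γ / a x) (Set.Ico 0 x₀) ∧
      MonotoneOn (fun x => |x - x₀| ^ γ / a x) (Set.Ioc x₀ 1) := by
  intro γ hγ
  obtain ⟨hint, hFTC⟩ := hW11
  obtain ⟨hx0, hx1⟩ := hx₀
  have hγ0 : 0 < γ := lt_of_lt_of_le hK hγ
  have hanonneg : ∀ x ∈ Icc (0:ℝ) 1, 0 ≤ a x := by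
    intro x hx
    rcases eq_or_ne x x₀ with h | h
    · simp [h, ha0]
    · exact (hpos x hx h).le
  -- relative integral representation
  have hrel : ∀ u ∈ Icc (0:ℝ) 1, ∀ t ∈ Icc (0:ℝ) 1, a t = a u + ∫ s in u..t, deriv a s := by
    intro u hu t ht
    have h1 := hFTC t ht
    have h2 := hFTC u hu
    have hadd : (∫ s in (0:ℝ)..u, deriv a s) + ∫ s in u..t, deriv a s
        = ∫ s in (0:ℝ)..t, deriv a s := by
      apply intervalIntegral.integral_add_adjacent_intervals
      · apply (hint.mono_set ?_).intervalIntegrable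
        rw [uIcc_of_le hu.1]
        exact Icc_subset_Icc le_rfl hu.2
      · apply (hint.mono_set ?_).intervalIntegrable
        exact uIcc_subset_Icc hu ht
    linarith
  -- the right-hand monotonicity of ψ(t) := a t * (t - x₀)^(-γ)
  have hright : ∀ u ∈ Ioc x₀ (1:ℝ), ∀ v ∈ Ioc x₀ (1:ℝ), u ≤ v →
      a v * (v - x₀) ^ (-γ) ≤ a u * (u - x₀) ^ (-γ) := by
    intro u hu v hv huv
    have hsub : Icc u v ⊆ Icc (0:ℝ) 1 :=
      Icc_subset_Icc (le_of_lt (lt_trans hx0 hu.1)) hv.2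
    have hsub' : Ioc u v ⊆ Icc (0:ℝ) 1 := fun t ht => hsub (Ioc_subset_Icc_self ht)
    have key := ibp_ac a (fun t => (t - x₀) ^ (-γ)) (deriv a)
        (fun t => (-γ) * (t - x₀) ^ (-γ - 1)) u v huv
        (hint.mono_set hsub')
        (fun t ht => hrel u (hsub ⟨le_rfl, huv⟩) t (hsub ht))
        (fun t ht => by
          have hd : (0:ℝ) < t - x₀ := sub_pos.2 (lt_of_lt_of_le hu.1 ht.1)
          have h1 : HasDerivAt (fun t : ℝ => t - x₀) 1 t := (hasDerivAt_id t).sub_const x₀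
          have h2 := h1.rpow_const (p := -γ) (Or.inl (ne_of_gt hd))
          simpa using h2)
        (by
          apply continuousOn_const.mul
          apply ContinuousOn.rpow_const (continuousOn_id.sub continuousOn_const)
          intro t ht
          exact Or.inl (sub_pos.2 (lt_of_lt_of_le hu.1 ht.1)).ne')
    have hneg : (∫ t in Ioc u v,
        (deriv a t * (t - x₀) ^ (-γ) + a t * ((-γ) * (t - x₀) ^ (-γ - 1)))) ≤ 0 := by
      apply integral_nonpos_of_ae
      have h1 : ∀ᵐ t ∂(volume.restrict (Ioc u v)), (t - x₀) * deriv a t ≤ K * a t :=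
        ae_restrict_of_ae_restrict_of_subset hsub' hineq
      have h2 : ∀ᵐ t ∂(volume.restrict (Ioc u v)), t ∈ Ioc u v :=
        ae_restrict_mem measurableSet_Ioc
      filter_upwards [h1, h2] with t h1t h2t
      have hd : (0:ℝ) < t - x₀ := sub_pos.2 (lt_of_lt_of_le hu.1 (le_of_lt h2t.1))
      have hat : 0 ≤ a t := hanonneg t (hsub' h2t)
      have hda : (t - x₀) * deriv a t ≤ γ * a t :=
        le_trans h1t (by nlinarith)
      have hsplit : (t - x₀) ^ (-γ) = (t - x₀) ^ (-γ - 1) * (t - x₀) := by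
        conv_lhs => rw [show (-γ) = (-γ - 1) + 1 by ring]
        rw [Real.rpow_add hd, Real.rpow_one]
      have hpow : (0:ℝ) ≤ (t - x₀) ^ (-γ - 1) := Real.rpow_nonneg hd.le _
      have : deriv a t * (t - x₀) ^ (-γ) + a t * ((-γ) * (t - x₀) ^ (-γ - 1))
          = (t - x₀) ^ (-γ - 1) * ((t - x₀) * deriv a t - γ * a t) := by
        rw [hsplit]; ring
      rw [this]
      exact mul_nonpos_of_nonneg_of_nonpos hpow (by linarith)
    linarith [key ▸ hneg]
  -- the left-hand monotonicity of φ(t) := a t * (x₀ - t)^(-γ)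
  have hleft : ∀ u ∈ Ico (0:ℝ) x₀, ∀ v ∈ Ico (0:ℝ) x₀, u ≤ v →
      a u * (x₀ - u) ^ (-γ) ≤ a v * (x₀ - v) ^ (-γ) := by
    intro u hu v hv huv
    have hsub : Icc u v ⊆ Icc (0:ℝ) 1 :=
      Icc_subset_Icc hu.1 (le_of_lt (lt_trans hv.2 hx1))
    have hsub' : Ioc u v ⊆ Icc (0:ℝ) 1 := fun t ht => hsub (Ioc_subset_Icc_self ht)
    have key := ibp_ac a (fun t => (x₀ - t) ^ (-γ)) (deriv a)
        (fun t => γ * (x₀ - t) ^ (-γ - 1)) u v huv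
        (hint.mono_set hsub')
        (fun t ht => hrel u (hsub ⟨le_rfl, huv⟩) t (hsub ht))
        (fun t ht => by
          have hd : (0:ℝ) < x₀ - t := sub_pos.2 (lt_of_le_of_lt ht.2 hv.2)
          have h1 : HasDerivAt (fun t : ℝ => x₀ - t) (-1) t := (hasDerivAt_id t).const_sub x₀
          have h2 := h1.rpow_const (p := -γ) (Or.inl (ne_of_gt hd))
          convert h2 using 1
          ring)
        (by
          apply continuousOn_const.mul
          apply ContinuousOn.rpow_const (continuousOn_const.sub continuousOn_id)
          intro t ht
          exact Or.inl (sub_pos.2 (lt_of_le_of_lt ht.2 hv.2)).ne')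
    have hnn : 0 ≤ (∫ t in Ioc u v,
        (deriv a t * (x₀ - t) ^ (-γ) + a t * (γ * (x₀ - t) ^ (-γ - 1)))) := by
      apply MeasureTheory.integral_nonneg_of_ae
      have h1 : ∀ᵐ t ∂(volume.restrict (Ioc u v)), (t - x₀) * deriv a t ≤ K * a t :=
        ae_restrict_of_ae_restrict_of_subset hsub' hineq
      have h2 : ∀ᵐ t ∂(volume.restrict (Ioc u v)), t ∈ Ioc u v :=
        ae_restrict_mem measurableSet_Ioc
      filter_upwards [h1, h2] with t h1t h2t
      have hd : (0:ℝ) < x₀ - t := sub_pos.2 (lt_of_le_of_lt h2t.2 hv.2)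
      have hat : 0 ≤ a t := hanonneg t (hsub' h2t)
      have hda : -(x₀ - t) * deriv a t ≤ γ * a t := by
        have := h1t
        nlinarith
      have hsplit : (x₀ - t) ^ (-γ) = (x₀ - t) ^ (-γ - 1) * (x₀ - t) := by
        conv_lhs => rw [show (-γ) = (-γ - 1) + 1 by ring]
        rw [Real.rpow_add hd, Real.rpow_one]
      have hpow : (0:ℝ) ≤ (x₀ - t) ^ (-γ - 1) := Real.rpow_nonneg hd.le _
      have heq : deriv a t * (x₀ - t) ^ (-γ) + a t * (γ * (x₀ - t) ^ (-γ - 1))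
          = (x₀ - t) ^ (-γ - 1) * ((x₀ - t) * deriv a t + γ * a t) := by
        rw [hsplit]; ring
      rw [heq]
      exact mul_nonneg hpow (by nlinarith)
    linarith [key ▸ hnn]
  constructor
  · -- AntitoneOn on Ico 0 x₀
    intro p hp q hq hpq
    have hap : 0 < a p := hpos p ⟨hp.1, (hp.2.trans hx1).le⟩ (ne_of_lt hp.2)
    have haq : 0 < a q := hpos q ⟨hq.1, (hq.2.trans hx1).le⟩ (ne_of_lt hq.2)
    have hdp : (0:ℝ) < x₀ - p := by linarith [hp.2]
    have hdq : (0:ℝ) < x₀ - q := by linarith [hq.2]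
    have hA : 0 < (x₀ - p) ^ γ := Real.rpow_pos_of_pos hdp γ
    have hB : 0 < (x₀ - q) ^ γ := Real.rpow_pos_of_pos hdq γ
    have h' := hleft p hp q hq hpq
    rw [Real.rpow_neg hdp.le, Real.rpow_neg hdq.le, ← div_eq_mul_inv, ← div_eq_mul_inv,
      div_le_div_iff₀ hA hB] at h'
    have e1 : |q - x₀| = x₀ - q := by rw [abs_of_neg (by linarith [hq.2]), neg_sub]
    have e2 : |p - x₀| = x₀ - p := by rw [abs_of_neg (by linarith [hp.2]), neg_sub]
    simp only [e1, e2]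
    rw [div_le_div_iff₀ haq hap]
    linarith
  · -- MonotoneOn on Ioc x₀ 1
    intro p hp q hq hpq
    have hap : 0 < a p := hpos p ⟨(hx0.trans hp.1).le, hp.2⟩ (ne_of_gt hp.1)
    have haq : 0 < a q := hpos q ⟨(hx0.trans hq.1).le, hq.2⟩ (ne_of_gt hq.1)
    have hdp : (0:ℝ) < p - x₀ := sub_pos.2 hp.1
    have hdq : (0:ℝ) < q - x₀ := sub_pos.2 hq.1
    have hA : 0 < (p - x₀) ^ γ := Real.rpow_pos_of_pos hdp γ
    have hB : 0 < (q - x₀) ^ γ := Real.rpow_pos_of_pos hdq γ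
    have h' := hright p hp q hq hpq
    rw [Real.rpow_neg hdq.le, Real.rpow_neg hdp.le, ← div_eq_mul_inv, ← div_eq_mul_inv,
      div_le_div_iff₀ hB hA] at h'
    have e1 : |q - x₀| = q - x₀ := abs_of_pos hdq
    have e2 : |p - x₀| = p - x₀ := abs_of_pos hdp
    simp only [e1, e2]
    rw [div_le_div_iff₀ hap haq]
    linarith
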